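/- (Gaussian tail integral step) For any nonincreasing nonnegative ε(x) = K·e^{−x²/2}, γ > 1, b > 0, H ∈ (0,1), and σ ≥ 0, the geometric-discretization sum is bounded by ∫_z^∞ ε(x)/x dx ≤ K·z^{−2}·e^{−z²/2} for z > 0; consequently ∑_{k=−∞}^∞ K·e^{−(1/2)((σ + b·x_k)/x_k^H /b')²} ≤ (K/(H(1−H)·log γ))·z^{−2}·e^{−z²/2} with z = b^H·σ^{1−H}/γ^{H(1−H)} (after rescaling by b'). -/

import Mathlib

open MeasureTheory

/-- Elementary step inequality: for `0 < z ≤ a` and `0 ≤ d`,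
`exp(-(a e^d)²/2) · d · z² ≤ exp(-a²/2) - exp(-(a e^d)²/2)`. -/
lemma st19_step (z a d : ℝ) (hz : 0 < z) (hza : z ≤ a) (hd : 0 ≤ d) :
    Real.exp (-(a * Real.exp d) ^ 2 / 2) * (d * z ^ 2)
      ≤ Real.exp (-a ^ 2 / 2) - Real.exp (-(a * Real.exp d) ^ 2 / 2) := by
  set c := a * Real.exp d with hc
  have ha : 0 < a := lt_of_lt_of_le hz hza
  have hed : 1 + d ≤ Real.exp d := by linarith [Real.add_one_le_exp d]
  have hac0 : a * (1 + d) ≤ c := by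
    rw [hc]; nlinarith
  have hac : a ≤ c := by nlinarith
  have hq : (c ^ 2 - a ^ 2) / 2 + 1 ≤ Real.exp ((c ^ 2 - a ^ 2) / 2) := by
    linarith [Real.add_one_le_exp ((c ^ 2 - a ^ 2) / 2)]
  have hsplit : Real.exp (-a ^ 2 / 2) = Real.exp (-c ^ 2 / 2) * Real.exp ((c ^ 2 - a ^ 2) / 2) := by
    rw [← Real.exp_add]; ring_nf
  have hecp : 0 < Real.exp (-c ^ 2 / 2) := Real.exp_pos _
  have hz2a : z ^ 2 ≤ a ^ 2 := by nlinarith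
  have hc2 : (a * (1 + d)) ^ 2 ≤ c ^ 2 := by
    apply pow_le_pow_left₀ (by positivity) hac0
  have h1 : d * z ^ 2 ≤ (c ^ 2 - a ^ 2) / 2 := by
    nlinarith [hc2, mul_le_mul_of_nonneg_right hz2a hd, sq_nonneg (a * d)]
  rw [hsplit]
  nlinarith [mul_le_mul_of_nonneg_left h1 hecp.le]

/-- Telescoping bound for the geometric Gaussian sum. -/
lemma st19_telesum (z D : ℝ) (hz : 0 < z) (hD : 0 < D) (N : ℕ) :
    ∑ n ∈ Finset.Icc 1 N, Real.exp (-(z * Real.exp (D * n)) ^ 2 / 2)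
      ≤ 1 / (D * z ^ 2) * Real.exp (-z ^ 2 / 2) := by
  set g : ℕ → ℝ := fun n => Real.exp (-(z * Real.exp (D * n)) ^ 2 / 2) with hg
  have hDz : (0:ℝ) < D * z ^ 2 := by positivity
  have hstep : ∀ n : ℕ, g (n + 1) ≤ 1 / (D * z ^ 2) * (g n - g (n + 1)) := by
    intro n
    have hza : z ≤ z * Real.exp (D * n) := by
      nlinarith [Real.one_le_exp (by positivity : (0:ℝ) ≤ D * n)]
    have key := st19_step z (z * Real.exp (D * n)) D hz hza hD.le
    have hgn0 : g n = Real.exp (-(z * Real.exp (D * (n:ℝ))) ^ 2 / 2) := by simp only [hg]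
    have hgn1 : g (n + 1) = Real.exp (-(z * Real.exp (D * ((n:ℝ) + 1))) ^ 2 / 2) := by
      simp only [hg]; push_cast; ring_nf
    have harg : z * Real.exp (D * n) * Real.exp D = z * Real.exp (D * ((n:ℝ) + 1)) := by
      rw [mul_assoc, ← Real.exp_add]; ring_nf
    rw [harg] at key
    rw [hgn0, hgn1]
    calc Real.exp (-(z * Real.exp (D * ((n:ℝ) + 1))) ^ 2 / 2)
        = Real.exp (-(z * Real.exp (D * ((n:ℝ) + 1))) ^ 2 / 2) * (D * z ^ 2) / (D * z ^ 2) := by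
          field_simp
      _ ≤ (Real.exp (-(z * Real.exp (D * (n:ℝ))) ^ 2 / 2)
            - Real.exp (-(z * Real.exp (D * ((n:ℝ) + 1))) ^ 2 / 2)) / (D * z ^ 2) :=
          (div_le_div_iff_of_pos_right hDz).2 key
      _ = 1 / (D * z ^ 2) * (Real.exp (-(z * Real.exp (D * (n:ℝ))) ^ 2 / 2)
            - Real.exp (-(z * Real.exp (D * ((n:ℝ) + 1))) ^ 2 / 2)) := by ring
  calc ∑ n ∈ Finset.Icc 1 N, g n = ∑ n ∈ Finset.Ico 1 (N + 1), g n := by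
        rw [Finset.Ico_add_one_right_eq_Icc]
    _ = ∑ i ∈ Finset.range (N + 1 - 1), g (1 + i) := Finset.sum_Ico_eq_sum_range g 1 (N + 1)
    _ = ∑ i ∈ Finset.range N, g (i + 1) := by
        simp only [Nat.add_sub_cancel]
        exact Finset.sum_congr rfl fun i _ => by rw [add_comm]
    _ ≤ ∑ i ∈ Finset.range N, 1 / (D * z ^ 2) * (g i - g (i + 1)) :=
        Finset.sum_le_sum fun i _ => hstep i
    _ = 1 / (D * z ^ 2) * (g 0 - g N) := by
        rw [← Finset.mul_sum, Finset.sum_range_sub' g N]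
    _ ≤ 1 / (D * z ^ 2) * g 0 := by
        have hgN : 0 ≤ g N := (Real.exp_pos _).le
        have : 0 ≤ 1 / (D * z ^ 2) := by positivity
        nlinarith
    _ = 1 / (D * z ^ 2) * Real.exp (-z ^ 2 / 2) := by
        simp [hg]

/-- Gaussian tail integral bound. -/
lemma st19_tail (z : ℝ) (hz : 0 < z) :
    (∫ x in Set.Ioi z, Real.exp (-x ^ 2 / 2) / x) ≤ (z ^ 2)⁻¹ * Real.exp (-z ^ 2 / 2) := by
  have hcont : ContinuousWithinAt (fun x : ℝ => -Real.exp (-x ^ 2 / 2)) (Set.Ici z) z :=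
    (Continuous.continuousWithinAt (by continuity))
  have hderiv : ∀ x ∈ Set.Ioi z,
      HasDerivAt (fun x : ℝ => -Real.exp (-x ^ 2 / 2)) (x * Real.exp (-x ^ 2 / 2)) x := by
    intro x _
    have h1 : HasDerivAt (fun x : ℝ => -x ^ 2 / 2) (-x) x := by
      have h := ((hasDerivAt_pow 2 x).neg).div_const 2
      refine h.congr_deriv ?_
      push_cast; ring
    have h2 := (Real.hasDerivAt_exp (-x ^ 2 / 2)).comp x h1
    have h3 := h2.neg
    refine h3.congr_deriv ?_
    ring
  have hpos : ∀ x ∈ Set.Ioi z, 0 ≤ x * Real.exp (-x ^ 2 / 2) := by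
    intro x hx
    have : 0 < x := lt_trans hz hx
    positivity
  have htend : Filter.Tendsto (fun x : ℝ => -Real.exp (-x ^ 2 / 2)) Filter.atTop (nhds 0) := by
    have h : Filter.Tendsto (fun x : ℝ => x ^ 2) Filter.atTop Filter.atTop :=
      Filter.tendsto_pow_atTop two_ne_zero
    have h2 := h.atTop_mul_const_of_neg (show -(2:ℝ)⁻¹ < 0 by norm_num)
    have h0 : Filter.Tendsto (fun x : ℝ => -x ^ 2 / 2) Filter.atTop Filter.atBot :=
      h2.congr fun x => by ring
    have h3 := Real.tendsto_exp_atBot.comp h0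
    have h4 := h3.neg
    simpa using h4
  have hIval : ∫ x in Set.Ioi z, x * Real.exp (-x ^ 2 / 2) = Real.exp (-z ^ 2 / 2) := by
    have h := integral_Ioi_of_hasDerivAt_of_nonneg hcont hderiv hpos htend
    simpa using h
  have hIint : IntegrableOn (fun x => x * Real.exp (-x ^ 2 / 2)) (Set.Ioi z) :=
    integrableOn_Ioi_deriv_of_nonneg hcont hderiv hpos htend
  have hIint2 : IntegrableOn (fun x => Real.exp (-x ^ 2 / 2) / x) (Set.Ioi z) := by
    have hmeas : AEStronglyMeasurable (fun x : ℝ => Real.exp (-x ^ 2 / 2) / x)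
        (volume.restrict (Set.Ioi z)) := by
      apply ContinuousOn.aestronglyMeasurable ?_ measurableSet_Ioi
      apply ContinuousOn.div (Continuous.continuousOn (by continuity)) continuousOn_id
      intro x hx
      exact ne_of_gt (lt_trans hz hx)
    apply (hIint.const_mul ((z ^ 2)⁻¹)).mono hmeas ?_
    rw [ae_restrict_iff' measurableSet_Ioi]
    filter_upwards with x
    intro hx
    have hx0 : 0 < x := lt_trans hz hx
    have he := Real.exp_pos (-x ^ 2 / 2)
    rw [Real.norm_eq_abs, Real.norm_eq_abs, abs_of_nonneg (by positivity),
      abs_of_nonneg (by positivity)]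
    rw [div_le_iff₀ hx0]
    have hzx : z ≤ x := le_of_lt hx
    have hz2 : (0:ℝ) < z ^ 2 := by positivity
    rw [inv_mul_eq_div, div_mul_eq_mul_div, le_div_iff₀ hz2]
    have hx2 : z ^ 2 ≤ x ^ 2 := by nlinarith
    nlinarith [mul_le_mul_of_nonneg_left hx2 he.le]
  have hmono : (∫ x in Set.Ioi z, Real.exp (-x ^ 2 / 2) / x)
      ≤ ∫ x in Set.Ioi z, (z ^ 2)⁻¹ * (x * Real.exp (-x ^ 2 / 2)) := by
    apply setIntegral_mono_on hIint2 (hIint.const_mul _) measurableSet_Ioi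
    intro x hx
    have hx0 : 0 < x := lt_trans hz hx
    have he := Real.exp_pos (-x ^ 2 / 2)
    have hzx : z ≤ x := le_of_lt hx
    have hz2 : (0:ℝ) < z ^ 2 := by positivity
    rw [div_le_iff₀ hx0, inv_mul_eq_div, div_mul_eq_mul_div, le_div_iff₀ hz2]
    have hx2 : z ^ 2 ≤ x ^ 2 := by nlinarith
    nlinarith [mul_le_mul_of_nonneg_left hx2 he.le]
  calc (∫ x in Set.Ioi z, Real.exp (-x ^ 2 / 2) / x)
      ≤ ∫ x in Set.Ioi z, (z ^ 2)⁻¹ * (x * Real.exp (-x ^ 2 / 2)) := hmono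
    _ = (z ^ 2)⁻¹ * ∫ x in Set.Ioi z, x * Real.exp (-x ^ 2 / 2) := by
        rw [integral_const_mul]
    _ = (z ^ 2)⁻¹ * Real.exp (-z ^ 2 / 2) := by rw [hIval]

theorem stmt_19 (K γ b b' τ H σ : ℝ) (hK : 0 ≤ K) (hγ : 1 < γ) (hb : 0 < b) (hb' : 0 < b')
    (hτ : 0 < τ) (hH0 : 0 < H) (hH1 : H < 1) (hσ : 0 ≤ σ) :
    (∀ z : ℝ, 0 < z →
      (∫ x in Set.Ioi z, (K * Real.exp (-x ^ 2 / 2)) / x)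
        ≤ K * z ^ (-(2 : ℝ)) * Real.exp (-z ^ 2 / 2)) ∧
    (∑' k : ℤ, K * Real.exp (-(1 / 2) *
          ((σ + b * (τ * γ ^ k)) / (τ * γ ^ k) ^ H / b') ^ 2)
      ≤ (K / (H * (1 - H) * Real.log γ)) *
          (b ^ H * σ ^ (1 - H) / γ ^ (H * (1 - H)) / b') ^ (-(2 : ℝ)) *
          Real.exp (-(b ^ H * σ ^ (1 - H) / γ ^ (H * (1 - H)) / b') ^ 2 / 2)) := by
  classical
  have hγ0 : (0:ℝ) < γ := by linarith
  have h1H : (0:ℝ) < 1 - H := by linarith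
  constructor
  · -- Part 1
    intro z hz
    have hzr : z ^ (-(2:ℝ)) = (z ^ 2)⁻¹ := by
      rw [Real.rpow_neg hz.le, show ((2:ℝ)) = ((2:ℕ):ℝ) by norm_num, Real.rpow_natCast]
    have h := st19_tail z hz
    calc (∫ x in Set.Ioi z, (K * Real.exp (-x ^ 2 / 2)) / x)
        = K * ∫ x in Set.Ioi z, Real.exp (-x ^ 2 / 2) / x := by
          simp_rw [mul_div_assoc]
          exact integral_const_mul K _
      _ ≤ K * ((z ^ 2)⁻¹ * Real.exp (-z ^ 2 / 2)) := mul_le_mul_of_nonneg_left h hK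
      _ = K * z ^ (-(2:ℝ)) * Real.exp (-z ^ 2 / 2) := by rw [hzr]; ring
  · -- Part 2
    rcases eq_or_lt_of_le hσ with hσ0 | hσpos
    · -- σ = 0
      have hσ0' : σ = 0 := hσ0.symm
      subst hσ0'
      have hZ0 : b ^ H * (0:ℝ) ^ (1 - H) / γ ^ (H * (1 - H)) / b' = 0 := by
        rw [Real.zero_rpow (by linarith : (1:ℝ) - H ≠ 0)]
        simp
      rw [hZ0, Real.zero_rpow (by norm_num : (-(2:ℝ)) ≠ 0)]
      simp only [mul_zero, zero_mul, neg_zero]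
      rcases eq_or_lt_of_le hK with hK0 | hKpos
      · simp only [← hK0, zero_mul]
        rw [tsum_zero]
      · have hns : ¬ Summable (fun k : ℤ => K * Real.exp (-(1 / 2) *
            ((0 + b * (τ * γ ^ k)) / (τ * γ ^ k) ^ H / b') ^ 2)) := by
          intro hs
          set c := K * Real.exp (-(1 / 2) * (b * τ ^ (1 - H) / b') ^ 2) with hc
          have hcpos : 0 < c := by positivity
          have hev := hs.tendsto_cofinite_zero.eventually_lt_const hcpos
          rw [Filter.eventually_cofinite] at hev
          have hsub : Set.Iic (0:ℤ) ⊆ {k : ℤ | ¬ K * Real.exp (-(1 / 2) *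
              ((0 + b * (τ * γ ^ k)) / (τ * γ ^ k) ^ H / b') ^ 2) < c} := by
            intro k hk
            simp only [Set.mem_setOf_eq, not_lt]
            have hx : (0:ℝ) < τ * γ ^ k := mul_pos hτ (zpow_pos hγ0 k)
            have hk0 : k ≤ 0 := hk
            have hγk : γ ^ k ≤ 1 := zpow_le_one_of_nonpos₀ hγ.le hk0
            have hxle : τ * γ ^ k ≤ τ := by nlinarith
            have hrw : (0 + b * (τ * γ ^ k)) / (τ * γ ^ k) ^ H
                = b * (τ * γ ^ k) ^ (1 - H) := by
              rw [zero_add, Real.rpow_sub hx, Real.rpow_one, mul_div_assoc]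
            rw [hrw, hc]
            apply mul_le_mul_of_nonneg_left _ hK
            rw [Real.exp_le_exp]
            have h1 : (τ * γ ^ k) ^ (1 - H) ≤ τ ^ (1 - H) :=
              Real.rpow_le_rpow hx.le hxle (by linarith)
            have h2 : (0:ℝ) ≤ (τ * γ ^ k) ^ (1 - H) := (Real.rpow_pos_of_pos hx _).le
            have h3 : b * (τ * γ ^ k) ^ (1 - H) / b' ≤ b * τ ^ (1 - H) / b' := by
              apply div_le_div_of_nonneg_right ?_ hb'.le
              · nlinarith
            have h4 : (b * (τ * γ ^ k) ^ (1 - H) / b') ^ 2 ≤ (b * τ ^ (1 - H) / b') ^ 2 := by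
              apply pow_le_pow_left₀ (by positivity) h3
            nlinarith
          have hinf : (Set.Iic (0:ℤ)).Infinite := Set.Iic_infinite 0
          exact (hinf.mono hsub) hev
        rw [tsum_eq_zero_of_not_summable hns]
    · -- σ > 0
      have hL : 0 < Real.log γ := Real.log_pos hγ
      set L := Real.log γ with hLdef
      set E := H * (1 - H) with hEdef
      have hE : 0 < E := mul_pos hH0 h1H
      set D := E * L with hDdef
      have hD : 0 < D := mul_pos hE hL
      set Z := b ^ H * σ ^ (1 - H) / γ ^ E / b' with hZdef
      have hZ : 0 < Z := by
        rw [hZdef]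
        have := Real.rpow_pos_of_pos hb H
        have := Real.rpow_pos_of_pos hσpos (1 - H)
        have := Real.rpow_pos_of_pos hγ0 E
        positivity
      have hxpos : ∀ k : ℤ, (0:ℝ) < τ * γ ^ k := fun k => mul_pos hτ (zpow_pos hγ0 k)
      have hlogx : ∀ k : ℤ, Real.log (τ * γ ^ k) = Real.log τ + k * L := by
        intro k
        rw [Real.log_mul (ne_of_gt hτ) (ne_of_gt (zpow_pos hγ0 k)), Real.log_zpow]
      set w : ℤ → ℝ :=
        fun k => max (σ / (τ * γ ^ k) ^ H / b') (b * (τ * γ ^ k) ^ (1 - H) / b') with hwdef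
      have hwpos : ∀ k, 0 < w k := by
        intro k
        have hx := hxpos k
        have h1 : 0 < σ / (τ * γ ^ k) ^ H / b' := by
          have := Real.rpow_pos_of_pos hx H
          positivity
        exact lt_of_lt_of_le h1 (le_max_left _ _)
      have hwle : ∀ k : ℤ, w k ≤ (σ + b * (τ * γ ^ k)) / (τ * γ ^ k) ^ H / b' := by
        intro k
        have hx := hxpos k
        have hxH : (0:ℝ) < (τ * γ ^ k) ^ H := Real.rpow_pos_of_pos hx H
        have hx1H : (0:ℝ) < (τ * γ ^ k) ^ (1 - H) := Real.rpow_pos_of_pos hx (1 - H)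
        have hsplit : (σ + b * (τ * γ ^ k)) / (τ * γ ^ k) ^ H
            = σ / (τ * γ ^ k) ^ H + b * (τ * γ ^ k) ^ (1 - H) := by
          rw [Real.rpow_sub hx, Real.rpow_one]
          field_simp
        rw [hwdef]
        apply max_le
        · rw [hsplit]
          apply div_le_div_of_nonneg_right ?_ hb'.le
          nlinarith
        · rw [hsplit]
          apply div_le_div_of_nonneg_right ?_ hb'.le
          have : 0 < σ / (τ * γ ^ k) ^ H := by positivity
          nlinarith
      have hcount : ∀ t : ℝ, 0 < t → ∀ j : ℤ, w j ≤ t →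
          ((Real.log σ - (Real.log t + Real.log b')) / H - Real.log τ) / L ≤ (j:ℝ) ∧
          ((j:ℝ) ≤ (((Real.log t + Real.log b') - Real.log b) / (1 - H) - Real.log τ) / L) := by
        intro t ht j hj
        have hx := hxpos j
        have hxH : (0:ℝ) < (τ * γ ^ j) ^ H := Real.rpow_pos_of_pos hx H
        rw [hwdef] at hj
        have h1 : σ / (τ * γ ^ j) ^ H / b' ≤ t := le_trans (le_max_left _ _) hj
        have h2 : b * (τ * γ ^ j) ^ (1 - H) / b' ≤ t := le_trans (le_max_right _ _) hj
        constructor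
        · have hA : σ ≤ t * b' * (τ * γ ^ j) ^ H := by
            rw [div_div] at h1
            have h1' := (div_le_iff₀ (by positivity)).1 h1
            nlinarith
          have hlogA : Real.log σ ≤ Real.log t + Real.log b' + H * Real.log (τ * γ ^ j) := by
            have h := Real.log_le_log hσpos hA
            rwa [Real.log_mul (by positivity) (ne_of_gt hxH),
              Real.log_mul (ne_of_gt ht) (ne_of_gt hb'), Real.log_rpow hx] at h
          rw [hlogx j] at hlogA
          rw [div_le_iff₀ hL, sub_le_iff_le_add, div_le_iff₀ hH0]
          ring_nf
          ring_nf at hlogA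
          linarith
        · have hB2 : (τ * γ ^ j) ^ (1 - H) ≤ t * b' / b := by
            rw [le_div_iff₀ hb, mul_comm]
            exact (div_le_iff₀ hb').1 h2
          have hlogB : (1 - H) * Real.log (τ * γ ^ j)
              ≤ Real.log t + Real.log b' - Real.log b := by
            have hxpow : (0:ℝ) < (τ * γ ^ j) ^ (1 - H) := Real.rpow_pos_of_pos hx (1 - H)
            have h := Real.log_le_log hxpow hB2
            rwa [Real.log_rpow hx, Real.log_div (by positivity) (ne_of_gt hb),
              Real.log_mul (ne_of_gt ht) (ne_of_gt hb')] at h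
          rw [hlogx j] at hlogB
          rw [le_div_iff₀ hL, le_sub_iff_add_le, le_div_iff₀ h1H]
          ring_nf
          ring_nf at hlogB
          linarith
      have hlogZ : Real.log Z = H * Real.log b + (1 - H) * Real.log σ - E * L - Real.log b' := by
        rw [hZdef, Real.log_div (ne_of_gt (by
              have := Real.rpow_pos_of_pos hb H
              have := Real.rpow_pos_of_pos hσpos (1 - H)
              have := Real.rpow_pos_of_pos hγ0 E
              positivity)) (ne_of_gt hb'),
          Real.log_div (ne_of_gt (by
              have := Real.rpow_pos_of_pos hb H
              have := Real.rpow_pos_of_pos hσpos (1 - H)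
              positivity)) (ne_of_gt (Real.rpow_pos_of_pos hγ0 E)),
          Real.log_mul (ne_of_gt (Real.rpow_pos_of_pos hb H))
            (ne_of_gt (Real.rpow_pos_of_pos hσpos (1 - H))),
          Real.log_rpow hb, Real.log_rpow hσpos, Real.log_rpow hγ0, ← hLdef]
        try ring
      apply tsum_le_of_sum_le'
      · apply mul_nonneg (mul_nonneg (div_nonneg hK (by positivity))
          (Real.rpow_nonneg hZ.le _)) (Real.exp_pos _).le
      · intro s
        set r : ℤ → ℕ :=
          fun k => (s.filter (fun j => w j < w k ∨ (w j = w k ∧ j ≤ k))).card with hrdef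
        have hrmem : ∀ k ∈ s, k ∈ s.filter (fun j => w j < w k ∨ (w j = w k ∧ j ≤ k)) := by
          intro k hk
          simp [Finset.mem_filter, hk]
        have hr1 : ∀ k ∈ s, 1 ≤ r k := by
          intro k hk
          exact Finset.card_pos.2 ⟨k, hrmem k hk⟩
        have hrcard : ∀ k ∈ s, r k ≤ s.card := fun k _ => Finset.card_filter_le _ _
        have hrmono : ∀ j ∈ s, ∀ k ∈ s, (w j < w k ∨ (w j = w k ∧ j < k)) → r j < r k := by
          intro j hj k hk hlex
          apply Finset.card_lt_card
          have hsub : s.filter (fun i => w i < w j ∨ (w i = w j ∧ i ≤ j))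
              ⊆ s.filter (fun i => w i < w k ∨ (w i = w k ∧ i ≤ k)) := by
            intro i hi
            rw [Finset.mem_filter] at hi ⊢
            refine ⟨hi.1, ?_⟩
            rcases hi.2 with h | ⟨heq, hile⟩
            · rcases hlex with h2 | ⟨h2, _⟩
              · exact Or.inl (lt_trans h h2)
              · exact Or.inl (h2 ▸ h)
            · rcases hlex with h2 | ⟨h2, hjk⟩
              · exact Or.inl (heq ▸ h2)
              · exact Or.inr ⟨heq.trans h2, hile.trans hjk.le⟩
          rw [Finset.ssubset_iff_of_subset hsub]
          refine ⟨k, hrmem k hk, ?_⟩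
          intro hmem
          rw [Finset.mem_filter] at hmem
          rcases hmem.2 with h | ⟨heq, hkle⟩
          · rcases hlex with h2 | ⟨h2, _⟩
            · exact absurd h2 (not_lt_of_gt h)
            · exact absurd h2.symm (ne_of_lt h)
          · rcases hlex with h2 | ⟨h2, hjk⟩
            · exact absurd heq (ne_of_gt h2)
            · exact absurd hkle (not_le_of_gt hjk)
        have hrinj : ∀ j ∈ s, ∀ k ∈ s, r j = r k → j = k := by
          intro j hj k hk hr
          by_contra hne
          rcases lt_trichotomy (w j) (w k) with h | h | h
          · exact absurd hr (ne_of_lt (hrmono j hj k hk (Or.inl h)))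
          · rcases lt_or_gt_of_ne hne with h2 | h2
            · exact absurd hr (ne_of_lt (hrmono j hj k hk (Or.inr ⟨h, h2⟩)))
            · exact absurd hr (ne_of_gt (hrmono k hk j hj (Or.inr ⟨h.symm, h2⟩)))
          · exact absurd hr (ne_of_gt (hrmono k hk j hj (Or.inl h)))
        have hrZ : ∀ k ∈ s, Z * Real.exp (D * (r k)) ≤ w k := by
          intro k hk
          have ht : 0 < w k := hwpos k
          set lo := ((Real.log σ - (Real.log (w k) + Real.log b')) / H - Real.log τ) / L
            with hlodef
          set hi := (((Real.log (w k) + Real.log b') - Real.log b) / (1 - H) - Real.log τ) / L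
            with hhidef
          have hsubIcc : s.filter (fun j => w j < w k ∨ (w j = w k ∧ j ≤ k))
              ⊆ Finset.Icc ⌈lo⌉ ⌊hi⌋ := by
            intro i hi2
            rw [Finset.mem_filter] at hi2
            have hwi : w i ≤ w k := by
              rcases hi2.2 with h | ⟨h, _⟩
              · exact le_of_lt h
              · exact le_of_eq h
            obtain ⟨hlo2, hhi2⟩ := hcount (w k) ht i hwi
            rw [Finset.mem_Icc]
            exact ⟨Int.ceil_le.2 hlo2, Int.le_floor.2 hhi2⟩
          have hcard : (r k : ℝ) ≤ hi - lo + 1 := by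
            have h1 : r k ≤ (Finset.Icc ⌈lo⌉ ⌊hi⌋).card := Finset.card_le_card hsubIcc
            have hne2 : ⌈lo⌉ ≤ ⌊hi⌋ := by
              have h3 := hsubIcc (hrmem k hk)
              rw [Finset.mem_Icc] at h3
              exact le_trans h3.1 h3.2
            rw [Int.card_Icc] at h1
            have h4 : (r k : ℤ) ≤ ⌊hi⌋ + 1 - ⌈lo⌉ := by
              rw [← Int.toNat_of_nonneg (by omega : (0:ℤ) ≤ ⌊hi⌋ + 1 - ⌈lo⌉)]
              exact_mod_cast h1
            have h5 : (r k : ℝ) ≤ (⌊hi⌋:ℝ) + 1 - (⌈lo⌉:ℝ) := by exact_mod_cast h4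
            have h6 := Int.floor_le hi
            have h7 := Int.le_ceil lo
            linarith
          have hcalc : D * (hi - lo + 1) = Real.log (w k) - Real.log Z := by
            rw [hlogZ, hhidef, hlodef, hDdef, hEdef]
            field_simp
            ring
          have hDr : D * (r k) ≤ Real.log (w k) - Real.log Z := by
            calc D * (r k) ≤ D * (hi - lo + 1) := mul_le_mul_of_nonneg_left hcard hD.le
              _ = Real.log (w k) - Real.log Z := hcalc
          have hlog2 : Real.log (Z * Real.exp (D * (r k))) ≤ Real.log (w k) := by
            rw [Real.log_mul (ne_of_gt hZ) (ne_of_gt (Real.exp_pos _)), Real.log_exp]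
            linarith
          calc Z * Real.exp (D * (r k))
              = Real.exp (Real.log (Z * Real.exp (D * (r k)))) :=
                (Real.exp_log (by positivity)).symm
            _ ≤ Real.exp (Real.log (w k)) := Real.exp_le_exp.2 hlog2
            _ = w k := Real.exp_log ht
        have hterm : ∀ k ∈ s,
            K * Real.exp (-(1 / 2) * ((σ + b * (τ * γ ^ k)) / (τ * γ ^ k) ^ H / b') ^ 2)
              ≤ K * Real.exp (-(Z * Real.exp (D * (r k))) ^ 2 / 2) := by
          intro k hk
          apply mul_le_mul_of_nonneg_left _ hK
          rw [Real.exp_le_exp]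
          have h1 : Z * Real.exp (D * (r k)) ≤ (σ + b * (τ * γ ^ k)) / (τ * γ ^ k) ^ H / b' :=
            le_trans (hrZ k hk) (hwle k)
          have h0 : (0:ℝ) ≤ Z * Real.exp (D * (r k)) := by positivity
          have h2 := pow_le_pow_left₀ h0 h1 2
          linarith
        calc ∑ k ∈ s, K * Real.exp (-(1 / 2) *
                ((σ + b * (τ * γ ^ k)) / (τ * γ ^ k) ^ H / b') ^ 2)
            ≤ ∑ k ∈ s, K * Real.exp (-(Z * Real.exp (D * (r k))) ^ 2 / 2) :=
              Finset.sum_le_sum hterm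
          _ = K * ∑ k ∈ s, Real.exp (-(Z * Real.exp (D * (r k))) ^ 2 / 2) := by
              rw [Finset.mul_sum]
          _ = K * ∑ n ∈ s.image r, Real.exp (-(Z * Real.exp (D * n)) ^ 2 / 2) := by
              rw [Finset.sum_image hrinj]
          _ ≤ K * ∑ n ∈ Finset.Icc 1 s.card, Real.exp (-(Z * Real.exp (D * n)) ^ 2 / 2) := by
              apply mul_le_mul_of_nonneg_left _ hK
              apply Finset.sum_le_sum_of_subset_of_nonneg
              · intro n hn
                rw [Finset.mem_image] at hn
                obtain ⟨k, hk, rfl⟩ := hn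
                rw [Finset.mem_Icc]
                exact ⟨hr1 k hk, hrcard k hk⟩
              · intros
                positivity
          _ ≤ K * (1 / (D * Z ^ 2) * Real.exp (-Z ^ 2 / 2)) :=
              mul_le_mul_of_nonneg_left (st19_telesum Z D hZ hD s.card) hK
          _ = K / (E * L) * Z ^ (-(2:ℝ)) * Real.exp (-Z ^ 2 / 2) := by
              rw [show Z ^ (-(2:ℝ)) = (Z ^ 2)⁻¹ by
                rw [Real.rpow_neg hZ.le, show ((2:ℝ)) = ((2:ℕ):ℝ) by norm_num,
                  Real.rpow_natCast], hDdef]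
              field_simp
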